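/- In the Doi–Koppinen setting (H Hopf algebra with bijective antipode S, P right H-comodule algebra, C right H-module coalgebra with group-like e, ρ(p) = Σ p₍₀₎ ⊗ e·p₍₁₎ and λ(p) = Σ e·S⁻¹(p₍₁₎) ⊗ p₍₀₎, π: C → D a right H-linear coalgebra map, ē = π(e)), the right and left ē-coinvariants coincide: {a ∈ P | (id ⊗ π)∘ρ(a) = a ⊗ ē} = {a ∈ P | (π ⊗ id)∘λ(a) = ē ⊗ a}. -/

import Mathlib

open TensorProduct

section FrozenDefs
variable (k H C D P : Type) [Field k]
  [Ring H] [HopfAlgebra k H]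
  [AddCommGroup C] [Module k C] [Coalgebra k C]
  [AddCommGroup D] [Module k D] [Coalgebra k D]
  [Ring P] [Algebra k P]

/-- The right `C`-coaction `ρ(p) = Σ p₍₀₎ ⊗ e·p₍₁₎`. -/
noncomputable def rhoDK (δ : P →ₗ[k] P ⊗[k] H) (act : C ⊗[k] H →ₗ[k] C) (e : C) :
    P →ₗ[k] P ⊗[k] C :=
  LinearMap.lTensor P (act ∘ₗ TensorProduct.mk k C H e) ∘ₗ δ

/-- The left `C`-coaction `λ(p) = Σ e·S⁻¹(p₍₁₎) ⊗ p₍₀₎`. -/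
noncomputable def lamDK (δ : P →ₗ[k] P ⊗[k] H) (act : C ⊗[k] H →ₗ[k] C)
    (Sinv : H →ₗ[k] H) (e : C) : P →ₗ[k] C ⊗[k] P :=
  LinearMap.rTensor P (act ∘ₗ TensorProduct.mk k C H e) ∘ₗ
    (TensorProduct.comm k P H).toLinearMap ∘ₗ
    LinearMap.lTensor P Sinv ∘ₗ δ

end FrozenDefs

set_option synthInstance.maxHeartbeats 400000
set_option maxHeartbeats 1000000

section HopfAux
open Coalgebra HopfAlgebra
variable {k H : Type} [Field k] [Ring H] [HopfAlgebra k H]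

set_option synthInstance.maxHeartbeats 400000
set_option maxHeartbeats 1000000

variable {k H : Type} [Field k] [Ring H] [HopfAlgebra k H]

/-- A representation of `comul (x*y)` from representations of `x` and `y`. -/
noncomputable def mulRepr (x y : H) (rx : Coalgebra.Repr k x (H × H)) (ry : Coalgebra.Repr k y (H × H)) :
    Coalgebra.Repr k (x * y) ((H × H) × (H × H)) where
  index := rx.index ×ˢ ry.index
  left p := rx.left p.1 * ry.left p.2
  right p := rx.right p.1 * ry.right p.2
  eq := by
    rw [Bialgebra.comul_mul, ← rx.eq, ← ry.eq, Finset.sum_mul_sum]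
    rw [Finset.sum_product]
    simp [Algebra.TensorProduct.tmul_mul_tmul]

lemma antipode_one' : antipode (R := k) (1 : H) = 1 := by
  have h := mul_antipode_rTensor_comul_apply (R := k) (1 : H)
  simpa [Algebra.TensorProduct.one_def] using h

lemma claim1 (x y : H) (rx : Coalgebra.Repr k x (H × H)) (ry : Coalgebra.Repr k y (H × H)) :
    ∑ i ∈ rx.index, ∑ j ∈ ry.index,
      antipode (R := k) (rx.left i * ry.left j) * (rx.right i * ry.right j) =
      (counit (R := k) x * counit (R := k) y) • (1 : H) := by
  have h := sum_antipode_mul_eq_smul (R := k) (mulRepr x y rx ry)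
  simp only [mulRepr, Finset.sum_product, Bialgebra.counit_mul] at h
  exact h

lemma sum_counit_right_smul {a : H} (r : Coalgebra.Repr k a (H × H)) :
    ∑ i ∈ r.index, counit (R := k) (r.right i) • r.left i = a := by
  have h := congrArg (TensorProduct.rid k H) (sum_tmul_counit_eq (R := k) r)
  simp only [map_sum, TensorProduct.rid_tmul, one_smul] at h
  exact h

lemma sum_counit_left_smul {a : H} (r : Coalgebra.Repr k a (H × H)) :
    ∑ i ∈ r.index, counit (R := k) (r.left i) • r.right i = a := by
  have h := congrArg (TensorProduct.lid k H) (sum_counit_tmul_eq (R := k) r)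
  simp only [map_sum, TensorProduct.lid_tmul, one_smul] at h
  exact h

noncomputable def phi2 : ((H ⊗[k] (H ⊗[k] H)) ⊗[k] (H ⊗[k] (H ⊗[k] H))) →ₗ[k] H :=
  LinearMap.mul' k H ∘ₗ
    TensorProduct.map (antipode (R := k) ∘ₗ LinearMap.mul' k H)
      (LinearMap.mul' k H ∘ₗ
        TensorProduct.map (LinearMap.mul' k H)
          (LinearMap.mul' k H ∘ₗ (TensorProduct.comm k H H).toLinearMap ∘ₗ
            TensorProduct.map (antipode (R := k)) (antipode (R := k))) ∘ₗ
        (TensorProduct.tensorTensorTensorComm k H H H H).toLinearMap) ∘ₗ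
    (TensorProduct.tensorTensorTensorComm k H (H ⊗[k] H) H (H ⊗[k] H)).toLinearMap

@[simp] lemma phi2_tmul (x y z u v w : H) :
    phi2 ((x ⊗ₜ[k] (y ⊗ₜ[k] z)) ⊗ₜ[k] (u ⊗ₜ[k] (v ⊗ₜ[k] w))) =
      antipode (R := k) (x * u) *
        ((y * v) * (antipode (R := k) w * antipode (R := k) z)) := by
  simp [phi2, TensorProduct.tensorTensorTensorComm_tmul]

lemma inner_collapse (y : H) (r : Coalgebra.Repr k y (H × H)) (W : H) :
    ∑ m ∈ r.index, r.left m * (antipode (R := k) (r.right m) * W) =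
      counit (R := k) y • W := by
  calc ∑ m ∈ r.index, r.left m * (antipode (R := k) (r.right m) * W)
      = (∑ m ∈ r.index, r.left m * antipode (R := k) (r.right m)) * W := by
        rw [Finset.sum_mul]; simp [mul_assoc]
    _ = (counit (R := k) y • (1 : H)) * W := by rw [sum_mul_antipode_eq_smul]
    _ = counit (R := k) y • W := by rw [smul_mul_assoc, one_mul]

lemma quadX (a b : H) (ra : Coalgebra.Repr k a (H × H)) (rb : Coalgebra.Repr k b (H × H))
    (ra2 : ∀ i : (H × H), Coalgebra.Repr k (ra.right i) (H × H))
    (rb2 : ∀ j : (H × H), Coalgebra.Repr k (rb.right j) (H × H)) :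
    ∑ i ∈ ra.index, ∑ l ∈ (ra2 i).index, ∑ j ∈ rb.index, ∑ m ∈ (rb2 j).index,
      antipode (R := k) (ra.left i * rb.left j) *
        (((ra2 i).left l * (rb2 j).left m) *
          (antipode (R := k) ((rb2 j).right m) * antipode (R := k) ((ra2 i).right l))) =
      antipode (R := k) (a * b) := by
  have hab : a * b = ∑ i ∈ ra.index, ∑ j ∈ rb.index,
      (counit (R := k) (rb.right j) * counit (R := k) (ra.right i)) •
        (ra.left i * rb.left j) := by
    conv_lhs => rw [← sum_counit_right_smul ra, ← sum_counit_right_smul rb]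
    rw [Finset.sum_mul_sum]
    simp only [smul_mul_assoc, mul_smul_comm, smul_smul]
  calc
    ∑ i ∈ ra.index, ∑ l ∈ (ra2 i).index, ∑ j ∈ rb.index, ∑ m ∈ (rb2 j).index,
      antipode (R := k) (ra.left i * rb.left j) *
        (((ra2 i).left l * (rb2 j).left m) *
          (antipode (R := k) ((rb2 j).right m) * antipode (R := k) ((ra2 i).right l)))
      = ∑ i ∈ ra.index, ∑ l ∈ (ra2 i).index, ∑ j ∈ rb.index,
          counit (R := k) (rb.right j) •
            (antipode (R := k) (ra.left i * rb.left j) *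
              ((ra2 i).left l * antipode (R := k) ((ra2 i).right l))) := by
      refine Finset.sum_congr rfl fun i _ => Finset.sum_congr rfl fun l _ =>
        Finset.sum_congr rfl fun j _ => ?_
      simp only [mul_assoc]
      rw [← Finset.mul_sum, ← Finset.mul_sum,
        inner_collapse (rb.right j) (rb2 j) (antipode (R := k) ((ra2 i).right l)),
        mul_smul_comm, mul_smul_comm]
    _ = ∑ i ∈ ra.index, ∑ j ∈ rb.index,
          counit (R := k) (rb.right j) • (counit (R := k) (ra.right i) •
            antipode (R := k) (ra.left i * rb.left j)) := by
      refine Finset.sum_congr rfl fun i _ => ?_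
      rw [Finset.sum_comm]
      refine Finset.sum_congr rfl fun j _ => ?_
      rw [← Finset.smul_sum, ← Finset.mul_sum, sum_mul_antipode_eq_smul (ra2 i),
        mul_smul_comm, mul_one]
    _ = antipode (R := k) (a * b) := by
      rw [hab, map_sum]
      refine Finset.sum_congr rfl fun i _ => ?_
      rw [map_sum]
      refine Finset.sum_congr rfl fun j _ => ?_
      rw [map_smul, smul_smul]

lemma quadY (a b : H) (ra : Coalgebra.Repr k a (H × H)) (rb : Coalgebra.Repr k b (H × H))
    (ra1 : ∀ i : (H × H), Coalgebra.Repr k (ra.left i) (H × H))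
    (rb1 : ∀ j : (H × H), Coalgebra.Repr k (rb.left j) (H × H)) :
    ∑ i ∈ ra.index, ∑ l ∈ (ra1 i).index, ∑ j ∈ rb.index, ∑ m ∈ (rb1 j).index,
      antipode (R := k) ((ra1 i).left l * (rb1 j).left m) *
        (((ra1 i).right l * (rb1 j).right m) *
          (antipode (R := k) (rb.right j) * antipode (R := k) (ra.right i))) =
      antipode (R := k) b * antipode (R := k) a := by
  have hbs : antipode (R := k) b =
      ∑ j ∈ rb.index, counit (R := k) (rb.left j) • antipode (R := k) (rb.right j) := by
    conv_lhs => rw [← sum_counit_left_smul rb]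
    rw [map_sum]
    simp only [map_smul]
  have has : antipode (R := k) a =
      ∑ i ∈ ra.index, counit (R := k) (ra.left i) • antipode (R := k) (ra.right i) := by
    conv_lhs => rw [← sum_counit_left_smul ra]
    rw [map_sum]
    simp only [map_smul]
  calc
    ∑ i ∈ ra.index, ∑ l ∈ (ra1 i).index, ∑ j ∈ rb.index, ∑ m ∈ (rb1 j).index,
      antipode (R := k) ((ra1 i).left l * (rb1 j).left m) *
        (((ra1 i).right l * (rb1 j).right m) *
          (antipode (R := k) (rb.right j) * antipode (R := k) (ra.right i)))
      = ∑ i ∈ ra.index, ∑ j ∈ rb.index,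
          (counit (R := k) (ra.left i) * counit (R := k) (rb.left j)) •
            (antipode (R := k) (rb.right j) * antipode (R := k) (ra.right i)) := by
      refine Finset.sum_congr rfl fun i _ => ?_
      rw [Finset.sum_comm]
      refine Finset.sum_congr rfl fun j _ => ?_
      have hre : ∀ (l : (H × H)) (m : (H × H)),
          antipode (R := k) ((ra1 i).left l * (rb1 j).left m) *
            (((ra1 i).right l * (rb1 j).right m) *
              (antipode (R := k) (rb.right j) * antipode (R := k) (ra.right i))) =
          (antipode (R := k) ((ra1 i).left l * (rb1 j).left m) *
            ((ra1 i).right l * (rb1 j).right m)) *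
              (antipode (R := k) (rb.right j) * antipode (R := k) (ra.right i)) :=
        fun l m => (mul_assoc _ _ _).symm
      simp only [hre, ← Finset.sum_mul]
      rw [claim1 (ra.left i) (rb.left j) (ra1 i) (rb1 j), smul_mul_assoc, one_mul]
    _ = antipode (R := k) b * antipode (R := k) a := by
      rw [hbs, has, Finset.sum_mul_sum, Finset.sum_comm]
      refine Finset.sum_congr rfl fun i _ => Finset.sum_congr rfl fun j _ => ?_
      rw [smul_mul_assoc, mul_smul_comm, smul_smul, mul_comm]

lemma sum4_comm {α β M : Type*} {γ : α → Type*} {δ : β → Type*} [AddCommMonoid M]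
    (sa : Finset α) (sb : Finset β) (sc : ∀ a, Finset (γ a)) (sd : ∀ b, Finset (δ b))
    (f : ∀ a, γ a → ∀ b, δ b → M) :
    ∑ b ∈ sb, ∑ d ∈ sd b, ∑ a ∈ sa, ∑ c ∈ sc a, f a c b d =
    ∑ a ∈ sa, ∑ c ∈ sc a, ∑ b ∈ sb, ∑ d ∈ sd b, f a c b d := by
  calc ∑ b ∈ sb, ∑ d ∈ sd b, ∑ a ∈ sa, ∑ c ∈ sc a, f a c b d
      = ∑ b ∈ sb, ∑ a ∈ sa, ∑ d ∈ sd b, ∑ c ∈ sc a, f a c b d := by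
        exact Finset.sum_congr rfl fun b _ => Finset.sum_comm
    _ = ∑ a ∈ sa, ∑ b ∈ sb, ∑ d ∈ sd b, ∑ c ∈ sc a, f a c b d := Finset.sum_comm
    _ = ∑ a ∈ sa, ∑ b ∈ sb, ∑ c ∈ sc a, ∑ d ∈ sd b, f a c b d := by
        exact Finset.sum_congr rfl fun a _ => Finset.sum_congr rfl fun b _ => Finset.sum_comm
    _ = ∑ a ∈ sa, ∑ c ∈ sc a, ∑ b ∈ sb, ∑ d ∈ sd b, f a c b d := by
        exact Finset.sum_congr rfl fun a _ => Finset.sum_comm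

lemma antipode_mul' (a b : H) :
    antipode (R := k) (a * b) = antipode (R := k) b * antipode (R := k) a := by
  obtain ⟨ra⟩ : Nonempty (Coalgebra.Repr k a (H × H)) := ⟨ℛ k a⟩
  obtain ⟨rb⟩ : Nonempty (Coalgebra.Repr k b (H × H)) := ⟨ℛ k b⟩
  have key : phi2 ((∑ i ∈ ra.index, ∑ l ∈ (fun i => ℛ k (ra.left i) : ∀ i, _) i |>.index,
        ((ℛ k (ra.left i)).left l) ⊗ₜ[k] (((ℛ k (ra.left i)).right l) ⊗ₜ[k] ra.right i)) ⊗ₜ[k]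
      (∑ j ∈ rb.index, ∑ m ∈ (ℛ k (rb.left j)).index,
        ((ℛ k (rb.left j)).left m) ⊗ₜ[k] (((ℛ k (rb.left j)).right m) ⊗ₜ[k] rb.right j))) =
      phi2 ((∑ i ∈ ra.index, ∑ l ∈ (ℛ k (ra.right i)).index,
        ra.left i ⊗ₜ[k] (((ℛ k (ra.right i)).left l) ⊗ₜ[k] ((ℛ k (ra.right i)).right l))) ⊗ₜ[k]
      (∑ j ∈ rb.index, ∑ m ∈ (ℛ k (rb.right j)).index,
        rb.left j ⊗ₜ[k] (((ℛ k (rb.right j)).left m) ⊗ₜ[k] ((ℛ k (rb.right j)).right m)))) := by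
    rw [Coalgebra.sum_tmul_tmul_eq (R := k) ra (fun i => ℛ k (ra.left i)) (fun i => ℛ k (ra.right i)),
      Coalgebra.sum_tmul_tmul_eq (R := k) rb (fun j => ℛ k (rb.left j)) (fun j => ℛ k (rb.right j))]
  simp only [TensorProduct.sum_tmul, TensorProduct.tmul_sum, map_sum, phi2_tmul] at key
  rw [sum4_comm ra.index rb.index (fun i => (ℛ k (ra.left i)).index)
      (fun j => (ℛ k (rb.left j)).index)
      (fun i l j m =>
        antipode (R := k) ((ℛ k (ra.left i)).left l * (ℛ k (rb.left j)).left m) *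
          (((ℛ k (ra.left i)).right l * (ℛ k (rb.left j)).right m) *
            (antipode (R := k) (rb.right j) * antipode (R := k) (ra.right i)))),
    sum4_comm ra.index rb.index (fun i => (ℛ k (ra.right i)).index)
      (fun j => (ℛ k (rb.right j)).index)
      (fun i l j m =>
        antipode (R := k) (ra.left i * rb.left j) *
          (((ℛ k (ra.right i)).left l * (ℛ k (rb.right j)).left m) *
            (antipode (R := k) ((ℛ k (rb.right j)).right m) *
              antipode (R := k) ((ℛ k (ra.right i)).right l))))] at key
  rw [quadY a b ra rb (fun i => ℛ k (ra.left i)) (fun j => ℛ k (rb.left j)),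
    quadX a b ra rb (fun i => ℛ k (ra.right i)) (fun j => ℛ k (rb.right j))] at key
  exact key.symm

section Sinv
variable (Sinv : H →ₗ[k] H)
  (hS1 : ∀ h : H, Sinv (HopfAlgebra.antipode (R := k) h) = h)
  (hS2 : ∀ h : H, HopfAlgebra.antipode (R := k) (Sinv h) = h)

include hS1 hS2

lemma key1 (h : H) :
    (LinearMap.mul' k H ∘ₗ (TensorProduct.comm k H H).toLinearMap ∘ₗ
      LinearMap.rTensor H Sinv) (comul (R := k) h) = counit (R := k) h • (1 : H) := by
  have hinj : Function.Injective (antipode (R := k) (A := H)) :=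
    Function.LeftInverse.injective hS1
  apply hinj
  have hmaps : (antipode (R := k) (A := H)) ∘ₗ (LinearMap.mul' k H ∘ₗ
      (TensorProduct.comm k H H).toLinearMap ∘ₗ LinearMap.rTensor H Sinv) =
      LinearMap.mul' k H ∘ₗ LinearMap.lTensor H (antipode (R := k)) := by
    ext g h'
    simp [antipode_mul', hS2]
  calc antipode (R := k) ((LinearMap.mul' k H ∘ₗ (TensorProduct.comm k H H).toLinearMap ∘ₗ
        LinearMap.rTensor H Sinv) (comul (R := k) h))
      = (LinearMap.mul' k H ∘ₗ LinearMap.lTensor H (antipode (R := k))) (comul (R := k) h) := by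
        rw [← hmaps]; rfl
    _ = algebraMap k H (counit (R := k) h) := by
        simpa using mul_antipode_lTensor_comul_apply (R := k) h
    _ = antipode (R := k) (counit (R := k) h • (1 : H)) := by
        rw [map_smul, antipode_one', Algebra.smul_def, mul_one]

lemma key2 (h : H) :
    (LinearMap.mul' k H ∘ₗ (TensorProduct.comm k H H).toLinearMap ∘ₗ
      LinearMap.lTensor H Sinv) (comul (R := k) h) = counit (R := k) h • (1 : H) := by
  have hinj : Function.Injective (antipode (R := k) (A := H)) :=
    Function.LeftInverse.injective hS1
  apply hinj
  have hmaps : (antipode (R := k) (A := H)) ∘ₗ (LinearMap.mul' k H ∘ₗ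
      (TensorProduct.comm k H H).toLinearMap ∘ₗ LinearMap.lTensor H Sinv) =
      LinearMap.mul' k H ∘ₗ LinearMap.rTensor H (antipode (R := k)) := by
    ext g h'
    simp [antipode_mul', hS2]
  calc antipode (R := k) ((LinearMap.mul' k H ∘ₗ (TensorProduct.comm k H H).toLinearMap ∘ₗ
        LinearMap.lTensor H Sinv) (comul (R := k) h))
      = (LinearMap.mul' k H ∘ₗ LinearMap.rTensor H (antipode (R := k))) (comul (R := k) h) := by
        rw [← hmaps]; rfl
    _ = algebraMap k H (counit (R := k) h) := by
        simpa using mul_antipode_rTensor_comul_apply (R := k) h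
    _ = antipode (R := k) (counit (R := k) h • (1 : H)) := by
        rw [map_smul, antipode_one', Algebra.smul_def, mul_one]

end Sinv

section DK
variable {C D P : Type}
  [AddCommGroup C] [Module k C] [Coalgebra k C]
  [AddCommGroup D] [Module k D] [Coalgebra k D]
  [Ring P] [Algebra k P]

variable (δ : P →ₗ[k] P ⊗[k] H) (actD : D ⊗[k] H →ₗ[k] D) (Sinv : H →ₗ[k] H) (eb : D)

/-- `Φ(p ⊗ d) = Σ d·S⁻¹(p₁) ⊗ p₀`. -/
noncomputable def PhiM : P ⊗[k] D →ₗ[k] D ⊗[k] P :=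
  LinearMap.rTensor P actD ∘ₗ (TensorProduct.assoc k D H P).symm.toLinearMap ∘ₗ
    LinearMap.lTensor D ((TensorProduct.comm k P H).toLinearMap ∘ₗ
      LinearMap.lTensor P Sinv ∘ₗ δ) ∘ₗ
    (TensorProduct.comm k P D).toLinearMap

/-- `Ξ(p ⊗ (g ⊗ h)) = eb·(h·S⁻¹(g)) ⊗ p`. -/
noncomputable def XiM : P ⊗[k] (H ⊗[k] H) →ₗ[k] D ⊗[k] P :=
  LinearMap.rTensor P (actD ∘ₗ TensorProduct.mk k D H eb ∘ₗ LinearMap.mul' k H ∘ₗ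
    (TensorProduct.comm k H H).toLinearMap ∘ₗ LinearMap.rTensor H Sinv) ∘ₗ
    (TensorProduct.comm k P (H ⊗[k] H)).toLinearMap

/-- `Ψ(d ⊗ p) = Σ p₀ ⊗ d·p₁`. -/
noncomputable def PsiM : D ⊗[k] P →ₗ[k] P ⊗[k] D :=
  LinearMap.lTensor P (actD ∘ₗ (TensorProduct.comm k H D).toLinearMap) ∘ₗ
    (TensorProduct.assoc k P H D).toLinearMap ∘ₗ
    LinearMap.rTensor D δ ∘ₗ (TensorProduct.comm k D P).toLinearMap

/-- `Ξ'(p ⊗ (g ⊗ h)) = p ⊗ eb·(S⁻¹(h)·g)`. -/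
noncomputable def XiM' : P ⊗[k] (H ⊗[k] H) →ₗ[k] P ⊗[k] D :=
  LinearMap.lTensor P (actD ∘ₗ TensorProduct.mk k D H eb ∘ₗ LinearMap.mul' k H ∘ₗ
    (TensorProduct.comm k H H).toLinearMap ∘ₗ LinearMap.lTensor H Sinv)

variable {δ actD Sinv eb} in
lemma PhiM_actD (hactD_mul : ∀ (d : D) (h h' : H),
      actD (actD (d ⊗ₜ[k] h) ⊗ₜ[k] h') = actD (d ⊗ₜ[k] (h * h'))) (p : P) (h : H) :
    PhiM δ actD Sinv (p ⊗ₜ[k] actD (eb ⊗ₜ[k] h)) =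
      XiM actD Sinv eb (TensorProduct.assoc k P H H (δ p ⊗ₜ[k] h)) := by
  simp only [PhiM, XiM, LinearMap.comp_apply, LinearEquiv.coe_coe, TensorProduct.comm_tmul,
    LinearMap.lTensor_tmul]
  generalize δ p = y
  induction y using TensorProduct.induction_on with
  | zero => simp
  | tmul q g =>
      simp [hactD_mul]
  | add y₁ y₂ ih₁ ih₂ =>
      simp only [map_add, TensorProduct.add_tmul, TensorProduct.tmul_add, map_add, ih₁, ih₂]

variable {δ actD Sinv eb} in
lemma PsiM_actD (hactD_mul : ∀ (d : D) (h h' : H),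
      actD (actD (d ⊗ₜ[k] h) ⊗ₜ[k] h') = actD (d ⊗ₜ[k] (h * h'))) (p : P) (h : H) :
    PsiM δ actD (actD (eb ⊗ₜ[k] Sinv h) ⊗ₜ[k] p) =
      XiM' actD Sinv eb (TensorProduct.assoc k P H H (δ p ⊗ₜ[k] h)) := by
  simp only [PsiM, XiM', LinearMap.comp_apply, LinearEquiv.coe_coe, TensorProduct.comm_tmul,
    LinearMap.rTensor_tmul]
  generalize δ p = y
  induction y using TensorProduct.induction_on with
  | zero => simp
  | tmul q g =>
      simp [hactD_mul]
  | add y₁ y₂ ih₁ ih₂ =>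
      simp only [map_add, TensorProduct.add_tmul, TensorProduct.tmul_add, map_add, ih₁, ih₂]

end DK


end HopfAux

variable (k H C D P : Type) [Field k]
  [Ring H] [HopfAlgebra k H]
  [AddCommGroup C] [Module k C] [Coalgebra k C]
  [AddCommGroup D] [Module k D] [Coalgebra k D]
  [Ring P] [Algebra k P]


open Coalgebra

lemma forwardDK
    (δ : P →ₗ[k] P ⊗[k] H)
    (hδcounit : ∀ p : P,
      TensorProduct.rid k P (LinearMap.lTensor P (counit (R := k) (A := H)) (δ p)) = p)
    (hδcoassoc : ∀ p : P,
      TensorProduct.assoc k P H H (LinearMap.rTensor H δ (δ p)) =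
        LinearMap.lTensor P (comul (R := k)) (δ p))
    (act : C ⊗[k] H →ₗ[k] C)
    (Sinv : H →ₗ[k] H)
    (hS1 : ∀ h : H, Sinv (HopfAlgebra.antipode (R := k) h) = h)
    (hS2 : ∀ h : H, HopfAlgebra.antipode (R := k) (Sinv h) = h)
    (actD : D ⊗[k] H →ₗ[k] D)
    (hactD_one : ∀ d : D, actD (d ⊗ₜ[k] (1 : H)) = d)
    (hactD_mul : ∀ (d : D) (h h' : H),
      actD (actD (d ⊗ₜ[k] h) ⊗ₜ[k] h') = actD (d ⊗ₜ[k] (h * h')))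
    (π : C →ₗ[k] D)
    (hπH : ∀ (c : C) (h : H), π (act (c ⊗ₜ[k] h)) = actD ((π c) ⊗ₜ[k] h))
    (e : C) (a : P)
    (hyp : LinearMap.lTensor P π (rhoDK k H C P δ act e a) = a ⊗ₜ[k] (π e)) :
    LinearMap.rTensor P π (lamDK k H C P δ act Sinv e a) = (π e) ⊗ₜ[k] a := by
  classical
  obtain ⟨s, hs⟩ := TensorProduct.exists_finset (R := k) (δ a)
  have h1 : ∑ i ∈ s, i.1 ⊗ₜ[k] actD (π e ⊗ₜ[k] i.2) = a ⊗ₜ[k] π e := by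
    calc ∑ i ∈ s, i.1 ⊗ₜ[k] actD (π e ⊗ₜ[k] i.2)
        = LinearMap.lTensor P π (rhoDK k H C P δ act e a) := by
          simp only [rhoDK, LinearMap.comp_apply, hs, map_sum, LinearMap.lTensor_tmul,
            TensorProduct.mk_apply, hπH]
      _ = a ⊗ₜ[k] π e := hyp
  have hgoal : LinearMap.rTensor P π (lamDK k H C P δ act Sinv e a) =
      ∑ i ∈ s, actD (π e ⊗ₜ[k] Sinv i.2) ⊗ₜ[k] i.1 := by
    simp only [lamDK, LinearMap.comp_apply, hs, map_sum, LinearMap.lTensor_tmul,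
      LinearEquiv.coe_coe, TensorProduct.comm_tmul, LinearMap.rTensor_tmul,
      TensorProduct.mk_apply, hπH]
  rw [hgoal]
  have c1 : PhiM δ actD Sinv (a ⊗ₜ[k] π e) =
      ∑ i ∈ s, actD (π e ⊗ₜ[k] Sinv i.2) ⊗ₜ[k] i.1 := by
    simp only [PhiM, LinearMap.comp_apply, LinearEquiv.coe_coe, TensorProduct.comm_tmul,
      LinearMap.lTensor_tmul, hs, map_sum, TensorProduct.tmul_sum,
      TensorProduct.assoc_symm_tmul, LinearMap.rTensor_tmul]
  have c2 : PhiM δ actD Sinv (a ⊗ₜ[k] π e) =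
      XiM actD Sinv (π e) (LinearMap.lTensor P (comul (R := k)) (δ a)) := by
    conv_lhs => rw [← h1, map_sum]
    rw [Finset.sum_congr rfl fun i _ => PhiM_actD hactD_mul i.1 i.2, ← hδcoassoc a]
    have hr : LinearMap.rTensor H δ (δ a) = ∑ i ∈ s, δ i.1 ⊗ₜ[k] i.2 := by
      rw [hs, map_sum]; simp only [LinearMap.rTensor_tmul]
    rw [hr, map_sum, map_sum]
  have c3 : XiM actD Sinv (π e) (LinearMap.lTensor P (comul (R := k)) (δ a)) =
      π e ⊗ₜ[k] a := by
    have ha : ∑ i ∈ s, counit (R := k) i.2 • i.1 = a := by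
      have h := hδcounit a
      rw [hs, map_sum, map_sum] at h
      simpa using h
    rw [hs, map_sum]
    simp only [LinearMap.lTensor_tmul, map_sum]
    have hterm : ∀ i : P × H, XiM (D := D) actD Sinv (π e) (i.1 ⊗ₜ[k] comul (R := k) i.2) =
        counit (R := k) i.2 • ((π e) ⊗ₜ[k] i.1) := by
      intro i
      have hk := key1 Sinv hS1 hS2 i.2
      simp only [LinearMap.comp_apply, LinearEquiv.coe_coe] at hk
      simp only [XiM, LinearMap.comp_apply, LinearEquiv.coe_coe, TensorProduct.comm_tmul,
        LinearMap.rTensor_tmul, hk, TensorProduct.mk_apply]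
      rw [TensorProduct.tmul_smul, map_smul, hactD_one, TensorProduct.smul_tmul']
    calc ∑ i ∈ s, XiM (D := D) actD Sinv (π e) (i.1 ⊗ₜ[k] comul (R := k) i.2)
        = ∑ i ∈ s, (π e) ⊗ₜ[k] (counit (R := k) i.2 • i.1) := by
          refine Finset.sum_congr rfl fun i _ => ?_
          rw [hterm i, TensorProduct.tmul_smul]
      _ = π e ⊗ₜ[k] a := by rw [← TensorProduct.tmul_sum, ha]
  rw [← c1, c2, c3]

lemma backwardDK
    (δ : P →ₗ[k] P ⊗[k] H)
    (hδcounit : ∀ p : P,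
      TensorProduct.rid k P (LinearMap.lTensor P (counit (R := k) (A := H)) (δ p)) = p)
    (hδcoassoc : ∀ p : P,
      TensorProduct.assoc k P H H (LinearMap.rTensor H δ (δ p)) =
        LinearMap.lTensor P (comul (R := k)) (δ p))
    (act : C ⊗[k] H →ₗ[k] C)
    (Sinv : H →ₗ[k] H)
    (hS1 : ∀ h : H, Sinv (HopfAlgebra.antipode (R := k) h) = h)
    (hS2 : ∀ h : H, HopfAlgebra.antipode (R := k) (Sinv h) = h)
    (actD : D ⊗[k] H →ₗ[k] D)
    (hactD_one : ∀ d : D, actD (d ⊗ₜ[k] (1 : H)) = d)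
    (hactD_mul : ∀ (d : D) (h h' : H),
      actD (actD (d ⊗ₜ[k] h) ⊗ₜ[k] h') = actD (d ⊗ₜ[k] (h * h')))
    (π : C →ₗ[k] D)
    (hπH : ∀ (c : C) (h : H), π (act (c ⊗ₜ[k] h)) = actD ((π c) ⊗ₜ[k] h))
    (e : C) (a : P)
    (hyp : LinearMap.rTensor P π (lamDK k H C P δ act Sinv e a) = (π e) ⊗ₜ[k] a) :
    LinearMap.lTensor P π (rhoDK k H C P δ act e a) = a ⊗ₜ[k] (π e) := by
  classical
  obtain ⟨s, hs⟩ := TensorProduct.exists_finset (R := k) (δ a)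
  have h1 : ∑ i ∈ s, actD (π e ⊗ₜ[k] Sinv i.2) ⊗ₜ[k] i.1 = π e ⊗ₜ[k] a := by
    calc ∑ i ∈ s, actD (π e ⊗ₜ[k] Sinv i.2) ⊗ₜ[k] i.1
        = LinearMap.rTensor P π (lamDK k H C P δ act Sinv e a) := by
          simp only [lamDK, LinearMap.comp_apply, hs, map_sum, LinearMap.lTensor_tmul,
            LinearEquiv.coe_coe, TensorProduct.comm_tmul, LinearMap.rTensor_tmul,
            TensorProduct.mk_apply, hπH]
      _ = π e ⊗ₜ[k] a := hyp
  have hgoal : LinearMap.lTensor P π (rhoDK k H C P δ act e a) =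
      ∑ i ∈ s, i.1 ⊗ₜ[k] actD (π e ⊗ₜ[k] i.2) := by
    simp only [rhoDK, LinearMap.comp_apply, hs, map_sum, LinearMap.lTensor_tmul,
      TensorProduct.mk_apply, hπH]
  rw [hgoal]
  have c1 : PsiM δ actD (π e ⊗ₜ[k] a) = ∑ i ∈ s, i.1 ⊗ₜ[k] actD (π e ⊗ₜ[k] i.2) := by
    simp only [PsiM, LinearMap.comp_apply, LinearEquiv.coe_coe, TensorProduct.comm_tmul,
      hs, map_sum, TensorProduct.sum_tmul, LinearMap.rTensor_tmul,
      TensorProduct.assoc_tmul, LinearMap.lTensor_tmul]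
  have c2 : PsiM δ actD (π e ⊗ₜ[k] a) =
      XiM' actD Sinv (π e) (LinearMap.lTensor P (comul (R := k)) (δ a)) := by
    conv_lhs => rw [← h1, map_sum]
    rw [Finset.sum_congr rfl fun i _ => PsiM_actD hactD_mul i.1 i.2, ← hδcoassoc a]
    have hr : LinearMap.rTensor H δ (δ a) = ∑ i ∈ s, δ i.1 ⊗ₜ[k] i.2 := by
      rw [hs, map_sum]; simp only [LinearMap.rTensor_tmul]
    rw [hr, map_sum, map_sum]
  have c3 : XiM' actD Sinv (π e) (LinearMap.lTensor P (comul (R := k)) (δ a)) =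
      a ⊗ₜ[k] π e := by
    have ha : ∑ i ∈ s, counit (R := k) i.2 • i.1 = a := by
      have h := hδcounit a
      rw [hs, map_sum, map_sum] at h
      simpa using h
    rw [hs, map_sum]
    simp only [LinearMap.lTensor_tmul, map_sum]
    have hterm : ∀ i : P × H, XiM' (D := D) actD Sinv (π e) (i.1 ⊗ₜ[k] comul (R := k) i.2) =
        counit (R := k) i.2 • (i.1 ⊗ₜ[k] (π e)) := by
      intro i
      have hk := key2 Sinv hS1 hS2 i.2
      simp only [LinearMap.comp_apply, LinearEquiv.coe_coe] at hk
      simp only [XiM', LinearMap.comp_apply, LinearEquiv.coe_coe, LinearMap.lTensor_tmul,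
        hk, TensorProduct.mk_apply]
      rw [TensorProduct.tmul_smul, map_smul, hactD_one, TensorProduct.tmul_smul]
    calc ∑ i ∈ s, XiM' (D := D) actD Sinv (π e) (i.1 ⊗ₜ[k] comul (R := k) i.2)
        = ∑ i ∈ s, (counit (R := k) i.2 • i.1) ⊗ₜ[k] (π e) := by
          refine Finset.sum_congr rfl fun i _ => ?_
          rw [hterm i, TensorProduct.smul_tmul']
      _ = a ⊗ₜ[k] π e := by rw [← TensorProduct.sum_tmul, ha]
  rw [← c1, c2, c3]


/-- in the Doi–Koppinen setting, the right and the left `ē`-coinvariants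
of `P` coincide. -/
theorem stmt14
    (δ : P →ₗ[k] P ⊗[k] H)
    (hδmul : ∀ p q : P, δ (p * q) = δ p * δ q) (hδone : δ 1 = 1)
    (hδcounit : ∀ p : P,
      TensorProduct.rid k P
        (LinearMap.lTensor P (Coalgebra.counit (R := k) (A := H)) (δ p)) = p)
    (hδcoassoc : ∀ p : P,
      TensorProduct.assoc k P H H (LinearMap.rTensor H δ (δ p)) =
        LinearMap.lTensor P (Coalgebra.comul (R := k) (A := H)) (δ p))
    (act : C ⊗[k] H →ₗ[k] C)
    (hact_one : ∀ c : C, act (c ⊗ₜ[k] (1 : H)) = c)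
    (hact_mul : ∀ (c : C) (h h' : H),
      act (act (c ⊗ₜ[k] h) ⊗ₜ[k] h') = act (c ⊗ₜ[k] (h * h')))
    (hact_comul : ∀ (c : C) (h : H),
      Coalgebra.comul (R := k) (act (c ⊗ₜ[k] h)) =
        TensorProduct.map act act
          (TensorProduct.tensorTensorTensorComm k C C H H
            ((Coalgebra.comul (R := k) c) ⊗ₜ[k] (Coalgebra.comul (R := k) h))))
    (hact_counit : ∀ (c : C) (h : H),
      Coalgebra.counit (R := k) (act (c ⊗ₜ[k] h)) =
        Coalgebra.counit (R := k) c * Coalgebra.counit (R := k) h)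
    (Sinv : H →ₗ[k] H)
    (hS1 : ∀ h : H, Sinv (HopfAlgebra.antipode (R := k) h) = h)
    (hS2 : ∀ h : H, HopfAlgebra.antipode (R := k) (Sinv h) = h)
    (actD : D ⊗[k] H →ₗ[k] D)
    (hactD_one : ∀ d : D, actD (d ⊗ₜ[k] (1 : H)) = d)
    (hactD_mul : ∀ (d : D) (h h' : H),
      actD (actD (d ⊗ₜ[k] h) ⊗ₜ[k] h') = actD (d ⊗ₜ[k] (h * h')))
    (π : C →ₗ[k] D)
    (hπΔ : ∀ c : C,
      Coalgebra.comul (R := k) (π c) = TensorProduct.map π π (Coalgebra.comul c))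
    (hπε : ∀ c : C,
      Coalgebra.counit (R := k) (π c) = Coalgebra.counit (R := k) c)
    (hπH : ∀ (c : C) (h : H), π (act (c ⊗ₜ[k] h)) = actD ((π c) ⊗ₜ[k] h))
    (e : C) (he_counit : Coalgebra.counit (R := k) e = 1)
    (he_comul : Coalgebra.comul (R := k) e = e ⊗ₜ[k] e) :
    {a : P | LinearMap.lTensor P π (rhoDK k H C P δ act e a) = a ⊗ₜ[k] (π e)} =
    {a : P | LinearMap.rTensor P π (lamDK k H C P δ act Sinv e a) = (π e) ⊗ₜ[k] a} := by
  ext a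
  simp only [Set.mem_setOf_eq]
  constructor
  · intro h
    exact forwardDK k H C D P δ hδcounit hδcoassoc act Sinv hS1 hS2 actD hactD_one
      hactD_mul π hπH e a h
  · intro h
    exact backwardDK k H C D P δ hδcounit hδcoassoc act Sinv hS1 hS2 actD hactD_one
      hactD_mul π hπH e a h
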